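/- Let T be an equimeasurable map on symmetrizable functions on ℝⁿ such that φ(Tf) = T(φ∘f) almost everywhere whenever f is symmetrizable and φ : ℝ → ℝ is right-continuous and increasing. Then T is monotonic: f ≤ g a.e. implies Tf ≤ Tg a.e. -/

import Mathlib

open MeasureTheory Set

/-- The essential infimum of a real-valued function, computed in `EReal`. -/
noncomputable def essInfE {n : ℕ} (f : EuclideanSpace ℝ (Fin n) → ℝ) : EReal :=
  essInf (fun x => (f x : EReal)) volume

/-- A function `f : ℝⁿ → ℝ` is symmetrizable if it is measurable and every
super-level set `{x | f x > t}` with `t > essinf f` has finite Lebesgue measure. -/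
def Symmetrizable {n : ℕ} (f : EuclideanSpace ℝ (Fin n) → ℝ) : Prop :=
  Measurable f ∧ ∀ t : ℝ, essInfE f < (t : EReal) → volume {x | t < f x} < ⊤

/- auxiliary definitions and lemmas -/
open scoped Classical


noncomputable def stp (q : ℝ) : ℝ → ℝ := fun s => if q ≤ s then 1 else 0

lemma stp_mono (q : ℝ) : Monotone (stp q) := by
  intro a b hab
  unfold stp
  by_cases h : q ≤ a
  · rw [if_pos h, if_pos (h.trans hab)]
  · by_cases h' : q ≤ b <;> simp [h, h']

lemma stp_rc (q : ℝ) : ∀ a : ℝ, ContinuousWithinAt (stp q) (Ici a) a := by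
  intro a
  by_cases h : q ≤ a
  · have : ∀ᶠ x in nhdsWithin a (Ici a), stp q x = 1 := by
      filter_upwards [self_mem_nhdsWithin] with x hx
      exact if_pos (h.trans hx)
    have h0 : stp q a = 1 := if_pos h
    exact (continuousWithinAt_const (b := (1:ℝ))).congr_of_eventuallyEq this h0
  · have hmem : Iio q ∈ nhdsWithin a (Ici a) :=
      mem_nhdsWithin_of_mem_nhds (Iio_mem_nhds (not_le.1 h))
    have : ∀ᶠ x in nhdsWithin a (Ici a), stp q x = 0 := by
      filter_upwards [hmem] with x hx
      exact if_neg (not_le.2 hx)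
    have h0 : stp q a = 0 := if_neg h
    exact (continuousWithinAt_const (b := (0:ℝ))).congr_of_eventuallyEq this h0

lemma stp_le_one (q s : ℝ) : stp q s ≤ 1 := by unfold stp; split <;> norm_num

lemma stp_nonneg (q s : ℝ) : 0 ≤ stp q s := by unfold stp; split <;> norm_num

lemma stp_two_le_stp_one (s : ℝ) : stp 2 s ≤ stp 1 s := by
  unfold stp
  by_cases h : (2:ℝ) ≤ s
  · rw [if_pos h, if_pos (by linarith)]
  · rw [if_neg h]; exact stp_nonneg 1 s

/- indicator -/
noncomputable def indc {n : ℕ} (S : Set (EuclideanSpace ℝ (Fin n))) :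
    EuclideanSpace ℝ (Fin n) → ℝ := fun x => if x ∈ S then 1 else 0

lemma indc_meas {n : ℕ} {S : Set (EuclideanSpace ℝ (Fin n))} (hS : MeasurableSet S) :
    Measurable (indc S) := Measurable.ite hS measurable_const measurable_const

lemma symmOf {n : ℕ} {f : EuclideanSpace ℝ (Fin n) → ℝ} (hm : Measurable f) (c : ℝ)
    (hc : ∀ᵐ x ∂volume, c ≤ f x)
    (hfin : ∀ t : ℝ, c < t → volume {x | t < f x} < ⊤) : Symmetrizable f := by
  refine ⟨hm, fun t ht => ?_⟩
  have hce : (c : EReal) ≤ essInfE f :=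
    le_essInf_of_ae_le _ (hc.mono fun x hx => EReal.coe_le_coe_iff.2 hx)
  exact hfin t (EReal.coe_lt_coe_iff.1 (lt_of_le_of_lt hce ht))

lemma symm_indc {n : ℕ} {S : Set (EuclideanSpace ℝ (Fin n))} (hS : MeasurableSet S)
    (h : volume S < ⊤ ∨ volume Sᶜ = 0) : Symmetrizable (indc S) := by
  rcases h with h | h
  · refine symmOf (indc_meas hS) 0 (Filter.Eventually.of_forall fun x => ?_) (fun t ht => ?_)
    · unfold indc; split <;> norm_num
    · refine lt_of_le_of_lt (measure_mono fun x hx => ?_) h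
      simp only [mem_setOf_eq, indc] at hx
      by_contra hxS
      rw [if_neg hxS] at hx
      exact absurd hx (not_lt.2 ht.le)
  · have hae : ∀ᵐ x ∂volume, x ∈ S := by
      rw [ae_iff]
      exact h
    refine symmOf (indc_meas hS) 1 (hae.mono fun x hx => by simp [indc, hx]) (fun t ht => ?_)
    have : {x | t < indc S x} = ∅ := by
      ext x
      simp only [mem_setOf_eq, mem_empty_iff_false, iff_false, not_lt]
      exact le_trans (by unfold indc; split <;> norm_num) ht.le
    simp [this]

lemma finite_or_conull {n : ℕ} {f : EuclideanSpace ℝ (Fin n) → ℝ} (hf : Symmetrizable f)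
    (q : ℝ) : volume {x | q ≤ f x} < ⊤ ∨ volume {x | f x < q} = 0 := by
  by_cases h : essInfE f < (q : EReal)
  · left
    obtain ⟨t, ht1, ht2⟩ := EReal.exists_between_coe_real h
    refine lt_of_le_of_lt (measure_mono fun x hx => ?_) (hf.2 t ht1)
    exact lt_of_lt_of_le (EReal.coe_lt_coe_iff.1 ht2) hx
  · right
    push_neg at h
    have hae : ∀ m : ℕ, ∀ᵐ x ∂volume, q - 1/(m+1) < f x := by
      intro m
      have hlt : ((q - 1/(m+1) : ℝ) : EReal) < essInfE f := by
        refine lt_of_lt_of_le (EReal.coe_lt_coe_iff.2 ?_) h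
        have : (0:ℝ) < 1/(m+1) := by positivity
        linarith
      exact (ae_lt_of_lt_essInf hlt).mono fun x hx => EReal.coe_lt_coe_iff.1 hx
    have hall := ae_all_iff.2 hae
    rw [← nonpos_iff_eq_zero]
    have haeq : ∀ᵐ x ∂volume, q ≤ f x := by
      filter_upwards [hall] with x hx
      by_contra hlt
      push_neg at hlt
      obtain ⟨m, hm⟩ := exists_nat_one_div_lt (show (0:ℝ) < q - f x by linarith)
      have := hx m
      have : (m:ℝ) + 1 = (m:ℝ) + 1 := rfl
      linarith [hx m, hm]
    rw [ae_iff] at haeq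
    refine le_of_eq_of_le ?_ haeq.le
    congr 1
    ext x
    simp [not_le]

lemma indc_vals {n : ℕ} (S : Set (EuclideanSpace ℝ (Fin n))) (x : EuclideanSpace ℝ (Fin n)) :
    indc S x = 0 ∨ indc S x = 1 := by
  unfold indc; split
  · exact Or.inr rfl
  · exact Or.inl rfl

lemma indc_nonneg {n : ℕ} (S : Set (EuclideanSpace ℝ (Fin n))) (x : EuclideanSpace ℝ (Fin n)) :
    0 ≤ indc S x := by unfold indc; split <;> norm_num

lemma indc_le_one {n : ℕ} (S : Set (EuclideanSpace ℝ (Fin n))) (x : EuclideanSpace ℝ (Fin n)) :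
    indc S x ≤ 1 := by unfold indc; split <;> norm_num

theorem stmt_7 {n : ℕ}
    (T : (EuclideanSpace ℝ (Fin n) → ℝ) → (EuclideanSpace ℝ (Fin n) → ℝ))
    (hmap : ∀ f, Symmetrizable f → Symmetrizable (T f))
    (hequi : ∀ f, Symmetrizable f → ∀ t : ℝ,
      volume {x | t < T f x} = volume {x | t < f x})
    (hcomm : ∀ f, Symmetrizable f → ∀ φ : ℝ → ℝ, Monotone φ →
      (∀ a : ℝ, ContinuousWithinAt φ (Ici a) a) →
      (fun x => φ (T f x)) =ᵐ[volume] T (fun x => φ (f x))) :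
    ∀ f g, Symmetrizable f → Symmetrizable g →
      f ≤ᵐ[volume] g → T f ≤ᵐ[volume] T g := by
  intro f g hf hg hfg
  -- Step A : T of a 0/1-valued symmetrizable function is a.e. an indicator
  have stepA : ∀ u : EuclideanSpace ℝ (Fin n) → ℝ, Symmetrizable u →
      (∀ x, u x = 0 ∨ u x = 1) →
      T u =ᵐ[volume] indc {y | 1 ≤ T u y} := by
    intro u hu hval
    have h := hcomm u hu (stp 1) (stp_mono 1) (stp_rc 1)
    have heq : (fun x => stp 1 (u x)) = u := by
      funext x
      rcases hval x with h0 | h1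
      · rw [h0]; unfold stp; rw [if_neg (by norm_num)]
      · rw [h1]; unfold stp; rw [if_pos le_rfl]
    rw [heq] at h
    refine h.symm.trans (Filter.Eventually.of_forall fun x => ?_)
    show stp 1 (T u x) = indc {y | 1 ≤ T u y} x
    unfold stp indc
    by_cases hx : (1:ℝ) ≤ T u x <;> simp [hx]
  -- volume of the indicator set
  have hvolV : ∀ u : EuclideanSpace ℝ (Fin n) → ℝ, Symmetrizable u →
      (∀ x, u x = 0 ∨ u x = 1) →
      volume {y | 1 ≤ T u y} = volume {x | (1:ℝ)/2 < u x} := by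
    intro u hu hval
    have hA := stepA u hu hval
    rw [← hequi u hu (1/2)]
    refine measure_congr ?_
    rw [Filter.eventuallyEq_set]
    filter_upwards [hA] with x hx
    show (1:ℝ) ≤ T u x ↔ (1:ℝ)/2 < T u x
    constructor
    · intro h; linarith
    · intro h
      by_contra hn
      rw [hx] at h
      unfold indc at h
      rw [if_neg (show x ∉ {y | 1 ≤ T u y} from hn)] at h
      norm_num at h
  -- two-level comparison
  have hTle : ∀ A B : Set (EuclideanSpace ℝ (Fin n)), MeasurableSet A → MeasurableSet B →
      A ⊆ B → volume B < ⊤ → T (indc A) ≤ᵐ[volume] T (indc B) := by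
    intro A B hAm hBm hAB hBfin
    set h := fun x => indc A x + indc B x with hh_def
    have hh : Symmetrizable h := by
      refine symmOf ((indc_meas hAm).add (indc_meas hBm)) 0
        (Filter.Eventually.of_forall fun x =>
          add_nonneg (indc_nonneg A x) (indc_nonneg B x)) (fun t ht => ?_)
      refine lt_of_le_of_lt (measure_mono fun x hx => ?_) hBfin
      simp only [mem_setOf_eq, hh_def] at hx
      by_contra hxB
      have hxA : x ∉ A := fun hA => hxB (hAB hA)
      unfold indc at hx
      rw [if_neg hxA, if_neg hxB] at hx
      norm_num at hx
      linarith
    have e2 : (fun x => stp 2 (h x)) = indc A := by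
      funext x
      show stp 2 (indc A x + indc B x) = indc A x
      unfold indc stp
      by_cases hxA : x ∈ A
      · have hxB : x ∈ B := hAB hxA
        norm_num [hxA, hxB]
      · by_cases hxB : x ∈ B <;> norm_num [hxA, hxB]
    have e1 : (fun x => stp 1 (h x)) = indc B := by
      funext x
      show stp 1 (indc A x + indc B x) = indc B x
      unfold indc stp
      by_cases hxB : x ∈ B
      · by_cases hxA : x ∈ A <;> norm_num [hxA, hxB]
      · have hxA : x ∉ A := fun hA => hxB (hAB hA)
        norm_num [hxA, hxB]
    have h2 := hcomm h hh (stp 2) (stp_mono 2) (stp_rc 2)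
    have h1 := hcomm h hh (stp 1) (stp_mono 1) (stp_rc 1)
    rw [e2] at h2
    rw [e1] at h1
    filter_upwards [h2, h1] with x hx2 hx1
    calc T (indc A) x = stp 2 (T h x) := hx2 ▸ rfl
      _ ≤ stp 1 (T h x) := stp_two_le_stp_one _
      _ = T (indc B) x := hx1 ▸ rfl
  -- the key pointwise-level comparison
  have key : ∀ q : ℝ, (fun x => stp q (T f x)) ≤ᵐ[volume] (fun x => stp q (T g x)) := by
    intro q
    set A := {x | q ≤ f x} with hA_def
    set B := {x | q ≤ g x} with hB_def
    have hAm : MeasurableSet A := measurableSet_le measurable_const hf.1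
    have hBm : MeasurableSet B := measurableSet_le measurable_const hg.1
    have euf : (fun x => stp q (f x)) = indc A := by
      funext x
      unfold stp indc
      by_cases hx : q ≤ f x
      · rw [if_pos hx, if_pos (show x ∈ A from hx)]
      · rw [if_neg hx, if_neg (show x ∉ A from hx)]
    have evg : (fun x => stp q (g x)) = indc B := by
      funext x
      unfold stp indc
      by_cases hx : q ≤ g x
      · rw [if_pos hx, if_pos (show x ∈ B from hx)]
      · rw [if_neg hx, if_neg (show x ∉ B from hx)]
    have hAc : Aᶜ = {x | f x < q} := by
      ext x; simp [hA_def, not_le]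
    have hBc : Bᶜ = {x | g x < q} := by
      ext x; simp [hB_def, not_le]
    have hu : Symmetrizable (indc A) := by
      refine symm_indc hAm ?_
      rcases finite_or_conull hf q with h | h
      · exact Or.inl h
      · right; rw [hAc]; exact h
    have hv : Symmetrizable (indc B) := by
      refine symm_indc hBm ?_
      rcases finite_or_conull hg q with h | h
      · exact Or.inl h
      · right; rw [hBc]; exact h
    have huv : indc A ≤ᵐ[volume] indc B := by
      filter_upwards [hfg] with x hx
      by_cases h1 : x ∈ A
      · have h2 : x ∈ B := le_trans h1 hx
        unfold indc; rw [if_pos h1, if_pos h2]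
      · exact le_trans (by unfold indc; rw [if_neg h1]) (indc_nonneg B x)
    have kl : T (indc A) ≤ᵐ[volume] T (indc B) := by
      by_cases hBfin : volume B < ⊤
      · -- Case I : B has finite measure
        have hABnull : volume (A \ B) = 0 := by
          refine measure_mono_null (fun x hx => ?_) (ae_iff.1 huv)
          simp only [mem_setOf_eq]
          unfold indc
          rw [if_pos hx.1, if_neg hx.2]
          norm_num
        set C := A ∪ B with hC_def
        have hCm : MeasurableSet C := hAm.union hBm
        have hCsub : C ⊆ (A \ B) ∪ B := by
          intro x hx
          rcases hx with hx | hx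
          · by_cases hxB : x ∈ B
            · exact Or.inr hxB
            · exact Or.inl ⟨hx, hxB⟩
          · exact Or.inr hx
        have hCle : volume C ≤ volume B := by
          refine le_trans (measure_mono hCsub) (le_trans (measure_union_le _ _) ?_)
          rw [hABnull, zero_add]
        have hCvol : volume C = volume B := le_antisymm hCle (measure_mono subset_union_right)
        have hCfin : volume C < ⊤ := lt_of_le_of_lt hCle hBfin
        have hC : Symmetrizable (indc C) := symm_indc hCm (Or.inl hCfin)
        have t1 : T (indc A) ≤ᵐ[volume] T (indc C) :=
          hTle A C hAm hCm subset_union_left hCfin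
        have t2 : T (indc B) ≤ᵐ[volume] T (indc C) :=
          hTle B C hBm hCm subset_union_right hCfin
        set V := {y | 1 ≤ T (indc B) y} with hV_def
        set W := {y | 1 ≤ T (indc C) y} with hW_def
        have hVm : MeasurableSet V := measurableSet_le measurable_const (hmap _ hv).1
        have hWm : MeasurableSet W := measurableSet_le measurable_const (hmap _ hC).1
        have hBV := stepA (indc B) hv (indc_vals B)
        have hCW := stepA (indc C) hC (indc_vals C)
        have hhalf : ∀ S : Set (EuclideanSpace ℝ (Fin n)),
            {x | (1:ℝ)/2 < indc S x} = S := by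
          intro S
          ext x
          simp only [mem_setOf_eq]
          unfold indc
          by_cases hx : x ∈ S
          · rw [if_pos hx]; norm_num [hx]
          · rw [if_neg hx]; norm_num [hx]
        have hVvol : volume V = volume B := by
          rw [hvolV (indc B) hv (indc_vals B), hhalf]
        have hWvol : volume W = volume B := by
          rw [hvolV (indc C) hC (indc_vals C), hhalf, hCvol]
        have hVW : volume (V \ W) = 0 := by
          have hae : ∀ᵐ x ∂volume, indc V x ≤ indc W x := by
            filter_upwards [t2, hBV, hCW] with x h1 h2 h3
            rw [← h2, ← h3]
            exact h1
          refine measure_mono_null (fun x hx => ?_) (ae_iff.1 hae)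
          simp only [mem_setOf_eq]
          unfold indc
          rw [if_pos hx.1, if_neg hx.2]
          norm_num
        have hWV : volume (W \ V) = 0 := by
          have e1 : volume (V ∩ W) + volume (V \ W) = volume V := measure_inter_add_diff V hWm
          rw [hVW, add_zero] at e1
          have e2 : volume (W ∩ V) + volume (W \ V) = volume W := measure_inter_add_diff W hVm
          rw [Set.inter_comm W V, e1, hVvol, hWvol] at e2
          have hBne : volume B ≠ ⊤ := ne_of_lt hBfin
          exact (ENNReal.add_right_inj hBne).1 (by rw [e2, add_zero])
        have hnull : volume ((V \ W) ∪ (W \ V)) = 0 := measure_union_null hVW hWV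
        filter_upwards [t1, hBV, hCW, measure_eq_zero_iff_ae_notMem.1 hnull] with x h1 h2 h3 h4
        have hiff : (x ∈ W) ↔ (x ∈ V) := by
          constructor
          · intro hw
            by_contra hvv
            exact h4 (Or.inr ⟨hw, hvv⟩)
          · intro hvv
            by_contra hw
            exact h4 (Or.inl ⟨hvv, hw⟩)
        have : indc W x = indc V x := by
          unfold indc
          by_cases hw : x ∈ W
          · rw [if_pos hw, if_pos (hiff.1 hw)]
          · rw [if_neg hw, if_neg (fun hvv => hw (hiff.2 hvv))]
        calc T (indc A) x ≤ T (indc C) x := h1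
          _ = indc W x := h3
          _ = indc V x := this
          _ = T (indc B) x := h2.symm
      · -- Case II : B is co-null with infinite measure
        have hBvol : volume B = ⊤ := by
          by_contra hne
          exact hBfin (lt_top_iff_ne_top.2 hne)
        have hBcnull : volume Bᶜ = 0 := by
          rcases finite_or_conull hg q with h | h
          · exact absurd h hBfin
          · rw [hBc]; exact h
        have hBae : ∀ᵐ x ∂volume, x ∈ B := by
          rw [ae_iff]; exact hBcnull
        set w := fun x => indc B x - 1 with hw_def
        have hw : Symmetrizable w := by
          refine symmOf ((indc_meas hBm).sub measurable_const) 0 ?_ (fun t ht => ?_)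
          · filter_upwards [hBae] with x hx
            show (0:ℝ) ≤ indc B x - 1
            unfold indc
            rw [if_pos hx]
            norm_num
          · have : {x | t < w x} = ∅ := by
              ext x
              simp only [mem_setOf_eq, mem_empty_iff_false, iff_false, not_lt, hw_def]
              have := indc_le_one B x
              linarith
            simp [this]
        have hplus := hcomm w hw (fun s => s + 1)
          (fun a b hab => by simpa using hab)
          (fun a => (continuous_id.add continuous_const).continuousWithinAt)
        have ewv : (fun x => w x + 1) = indc B := by
          funext x
          simp [hw_def]
        rw [ewv] at hplus
        have hBV := stepA (indc B) hv (indc_vals B)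
        set V := {y | 1 ≤ T (indc B) y} with hV_def
        have hVvol : volume V = ⊤ := by
          rw [hvolV (indc B) hv (indc_vals B)]
          have : {x | (1:ℝ)/2 < indc B x} = B := by
            ext x
            simp only [mem_setOf_eq]
            unfold indc
            by_cases hx : x ∈ B
            · rw [if_pos hx]; norm_num [hx]
            · rw [if_neg hx]; norm_num [hx]
          rw [this, hBvol]
        have hTw : T w =ᵐ[volume] (fun x => indc V x - 1) := by
          filter_upwards [hplus, hBV] with x h1 h2
          have : T w x + 1 = indc V x := by rw [h1, h2]
          linarith
        have hVc : volume Vᶜ = 0 := by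
          by_contra hne
          have hessle : essInfE (T w) ≤ ((-1 : ℝ) : EReal) := by
            by_contra hgt
            push_neg at hgt
            have hae2 := ae_lt_of_lt_essInf hgt
            have : ∀ᵐ x ∂volume, x ∈ V := by
              filter_upwards [hae2, hTw] with x h1 h2
              have h3 : (-1:ℝ) < T w x := EReal.coe_lt_coe_iff.1 h1
              rw [h2] at h3
              by_contra hxV
              unfold indc at h3
              rw [if_neg hxV] at h3
              linarith
            rw [ae_iff] at this
            exact hne this
          have hfin2 := (hmap w hw).2 (-1/2)
            (lt_of_le_of_lt hessle (EReal.coe_lt_coe_iff.2 (by norm_num)))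
          have hveq : volume {x | (-1/2 : ℝ) < T w x} = volume V := by
            refine measure_congr ?_
            rw [Filter.eventuallyEq_set]
            filter_upwards [hTw] with x hx
            show (-1/2 : ℝ) < T w x ↔ x ∈ V
            rw [hx]
            unfold indc
            by_cases hxV : x ∈ V
            · rw [if_pos hxV]; norm_num [hxV]
            · rw [if_neg hxV]; norm_num [hxV]
          rw [hveq, hVvol] at hfin2
          exact absurd hfin2 (lt_irrefl ⊤)
        have hVae : ∀ᵐ x ∂volume, x ∈ V := by
          rw [ae_iff]; exact hVc
        have hAu := stepA (indc A) hu (indc_vals A)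
        filter_upwards [hAu, hBV, hVae] with x h1 h2 h3
        rw [h1, h2]
        refine le_trans (indc_le_one _ x) ?_
        unfold indc
        rw [if_pos h3]
    -- assemble for this level
    have hcf := hcomm f hf (stp q) (stp_mono q) (stp_rc q)
    have hcg := hcomm g hg (stp q) (stp_mono q) (stp_rc q)
    rw [euf] at hcf
    rw [evg] at hcg
    filter_upwards [hcf, hcg, kl] with x h1 h2 h3
    calc stp q (T f x) = T (indc A) x := h1
      _ ≤ T (indc B) x := h3
      _ = stp q (T g x) := h2.symm
  -- conclude
  have hae := ae_all_iff.2 (fun q : ℚ => key (q : ℝ))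
  filter_upwards [hae] with x hx
  by_contra hlt
  push_neg at hlt
  obtain ⟨q, hq1, hq2⟩ := exists_rat_btwn hlt
  have h := hx q
  unfold stp at h
  rw [if_pos hq2.le, if_neg (not_le.2 hq1)] at h
  norm_num at h
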